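/- Let F be a linearly ordered field, A a magnitude of F, a ∈ F, and suppose the coset α = a + A is zeroless (0 ∉ α). Then, with Minkowski (pointwise) set products and α⁻¹ = {x⁻¹ | x ∈ α}: α * α⁻¹ = {1} + a⁻¹ • A and α * ({1} + a⁻¹ • A) = α; hence α * α⁻¹ * α = α, so every zeroless coset is a regular element of the commutative semigroup of zeroless cosets under Minkowski multiplication, with {1} + a⁻¹ • A acting as its individualized neutral element (unity). -/

import Mathlib

open Pointwise

/-- A *magnitude* of a linearly ordered field `F` is an order-convex additive subgroup of `F`,
given as a set: it contains `0`, is closed under addition and negation, and is order-convex. -/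
def IsMagnitude {F : Type*} [Field F] [LinearOrder F] [IsStrictOrderedRing F] (A : Set F) : Prop :=
  (0 : F) ∈ A ∧ (∀ x ∈ A, ∀ y ∈ A, x + y ∈ A) ∧ (∀ x ∈ A, -x ∈ A) ∧
    (∀ x ∈ A, ∀ y ∈ A, ∀ z : F, x ≤ z → z ≤ y → z ∈ A)

/-- Order relation on subsets of `F`: `S ≤ T` iff every element of `S` is below some element of `T`. -/
def SetLE {F : Type*} [Field F] [LinearOrder F] [IsStrictOrderedRing F] (S T : Set F) : Prop :=
  ∀ x ∈ S, ∃ y ∈ T, x ≤ y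

theorem coset_multiplicative_regular {F : Type*} [Field F] [LinearOrder F] [IsStrictOrderedRing F]
    (A : Set F) (hA : IsMagnitude A) (a : F) (hzl : (0 : F) ∉ ({a} + A)) :
    ({a} + A) * ((fun x => x⁻¹) '' ({a} + A)) = {1} + a⁻¹ • A ∧
      ({a} + A) * ({1} + a⁻¹ • A) = ({a} + A) ∧
      ({a} + A) * ((fun x => x⁻¹) '' ({a} + A)) * ({a} + A) = ({a} + A) := by
  obtain ⟨h0, hadd, hneg, hconv⟩ := hA
  have hmem : ∀ y ∈ A, a + y ∈ ({a} + A) := fun y hy => Set.add_mem_add rfl hy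
  have hne : ∀ y ∈ A, a + y ≠ 0 := by
    intro y hy h
    exact hzl (h ▸ hmem y hy)
  have ha : a ≠ 0 := by
    have := hne 0 h0; simpa using this
  have habs : ∀ z ∈ A, ∀ w : F, |w| ≤ |z| → w ∈ A := by
    intro z hz w hw
    have hzabs : |z| ∈ A := by
      rcases abs_choice z with h | h
      · rw [h]; exact hz
      · rw [h]; exact hneg z hz
    have hnabs : -|z| ∈ A := hneg _ hzabs
    obtain ⟨hw1, hw2⟩ := abs_le.mp hw
    exact hconv _ hnabs _ hzabs w hw1 hw2
  have hlta : ∀ x ∈ A, |x| ≤ |a| := by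
    intro x hx
    by_contra h
    push_neg at h
    have : a ∈ A := habs x hx a h.le
    exact hzl (by simpa using hmem (-a) (hneg a this))
  have hkey : ∀ y ∈ A, |a| ≤ 2 * |a + y| := by
    intro y hy
    by_contra h
    push_neg at h
    have h2y : y + y ∈ A := hadd y hy y hy
    have hle : |a| ≤ |y + y| := by
      have habs2 : |y + y| = |(a + y) + (a + y) - (a + a)| := by ring_nf
      rw [habs2]
      have haa : |a + a| = 2 * |a| := by
        rw [show a + a = 2 * a by ring, abs_mul]; norm_num
      have hb : |(a + y) + (a + y)| ≤ 2 * |a + y| :=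
        calc |(a + y) + (a + y)| ≤ |a + y| + |a + y| := abs_add_le _ _
        _ = 2 * |a + y| := by ring
      have hc := abs_sub_abs_le_abs_sub (a + a) ((a + y) + (a + y))
      rw [abs_sub_comm]
      nlinarith [abs_nonneg (a + y)]
    have : a ∈ A := habs _ h2y a hle
    exact hzl (by simpa using hmem (-a) (hneg a this))
  -- first equality
  have h1 : ({a} + A) * ((fun x => x⁻¹) '' ({a} + A)) = {1} + a⁻¹ • A := by
    ext w
    simp only [Set.singleton_add, Set.mem_mul, Set.mem_image, Set.mem_smul_set]
    constructor
    · rintro ⟨u, ⟨x, hx, rfl⟩, v, ⟨u', ⟨y, hy, rfl⟩, rfl⟩, rfl⟩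
      have hay := hne y hy
      have hsub : x - y ∈ A := by
        have := hadd x hx (-y) (hneg y hy); simpa [sub_eq_add_neg] using this
      set s : F := a * (x - y) / (a + y) with hs
      have hsA : s ∈ A := by
        apply habs ((x - y) + (x - y)) (hadd _ hsub _ hsub)
        have he : |s| = |a| * |x - y| / |a + y| := by
          rw [hs, abs_div, abs_mul]
        have hpos : 0 < |a + y| := abs_pos.mpr hay
        rw [he, div_le_iff₀ hpos]
        have h2 : |(x - y) + (x - y)| = 2 * |x - y| := by
          rw [show (x - y) + (x - y) = 2 * (x - y) by ring, abs_mul]; norm_num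
        rw [h2]
        nlinarith [hkey y hy, abs_nonneg (x - y)]
      refine ⟨a⁻¹ * s, ⟨s, hsA, rfl⟩, ?_⟩
      rw [hs]
      field_simp
      ring
    · rintro ⟨v, ⟨t, ht, rfl⟩, rfl⟩
      refine ⟨a + t, ⟨t, ht, rfl⟩, (a + 0)⁻¹, ⟨a + 0, ⟨0, h0, rfl⟩, rfl⟩, ?_⟩
      rw [add_zero]
      field_simp
      rw [smul_eq_mul, mul_add, ← mul_assoc, mul_one_div_cancel ha]
      ring
  -- second equality
  have h2 : ({a} + A) * ({1} + a⁻¹ • A) = ({a} + A) := by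
    ext w
    simp only [Set.singleton_add, Set.mem_mul, Set.mem_image, Set.mem_smul_set]
    constructor
    · rintro ⟨u, ⟨x, hx, rfl⟩, v, ⟨v', ⟨t, ht, rfl⟩, rfl⟩, rfl⟩
      have hxta : x * t / a ∈ A := by
        apply habs t ht
        rw [abs_div, abs_mul, div_le_iff₀ (abs_pos.mpr ha)]
        nlinarith [hlta x hx, abs_nonneg t, abs_nonneg x]
      refine ⟨x + t + x * t / a, hadd _ (hadd x hx t ht) _ hxta, ?_⟩
      field_simp
      have hai : a * a⁻¹ = 1 := mul_inv_cancel₀ ha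
      linear_combination (-(x * t + a * t)) * hai
    · rintro ⟨x, hx, rfl⟩
      refine ⟨a + x, ⟨x, hx, rfl⟩, 1 + a⁻¹ * 0, ⟨a⁻¹ * 0, ⟨0, h0, rfl⟩, rfl⟩, ?_⟩
      simp
  refine ⟨h1, h2, ?_⟩
  rw [h1, mul_comm ({1} + a⁻¹ • A) ({a} + A)]
  exact h2
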